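/- With the section s((d,m)) = (s_a(d), d × m), where s_a(d) ∈ SO(3) satisfies s_a(d)·e₃ = d for every unit vector d, the twist of a pure translation g = (I, t) ∈ SE(3) at any ray x = (d,m) ∈ 𝓡 equals h(g,x) = s(g·x)⁻¹·g·s(x) = (I, ⟨t, d⟩·e₃). -/

import Mathlib

noncomputable section
open scoped InnerProductSpace

/-- ℝ³ with the Euclidean norm. -/
abbrev E3 : Type := EuclideanSpace ℝ (Fin 3)

/-- Elements of SE(3): a pair of a 3×3 matrix and a translation vector. -/
abbrev SE3 : Type := Matrix (Fin 3) (Fin 3) ℝ × E3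

/-- Matrix-vector multiplication on ℝ³. -/
def mv (R : Matrix (Fin 3) (Fin 3) ℝ) (v : E3) : E3 := WithLp.toLp 2 (R.mulVec v)

/-- Cross product on ℝ³. -/
def cross3 (a b : E3) : E3 :=
  WithLp.toLp 2 ![a 1 * b 2 - a 2 * b 1, a 2 * b 0 - a 0 * b 2, a 0 * b 1 - a 1 * b 0]

/-- `R` is a special orthogonal 3×3 matrix: `RᵀR = I` and `det R = 1`. -/
def isSO3 (R : Matrix (Fin 3) (Fin 3) ℝ) : Prop :=
  R.transpose * R = 1 ∧ R.det = 1

/-- `(d, m)` are Plücker coordinates of an oriented line: `d` is a unit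
direction and `m` is a moment with `⟨d, m⟩ = 0`. -/
def isRay (d m : E3) : Prop := ‖d‖ = 1 ∧ ⟪d, m⟫_ℝ = 0

/-- The standard basis vector e₁. -/
def e1 : E3 := WithLp.toLp 2 ![1, 0, 0]

/-- The standard basis vector e₂. -/
def e2 : E3 := WithLp.toLp 2 ![0, 1, 0]

/-- The standard basis vector e₃. -/
def e3 : E3 := WithLp.toLp 2 ![0, 0, 1]

/-- Action of `(R, t) ∈ SE(3)` on Plücker coordinates:
`(R,t)·(d,m) = (Rd, Rm + t × (Rd))`. -/
def rayAct (R : Matrix (Fin 3) (Fin 3) ℝ) (t : E3) (d m : E3) : E3 × E3 :=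
  (mv R d, mv R m + cross3 t (mv R d))

/-- Multiplication in SE(3): `(R₁,t₁)·(R₂,t₂) = (R₁R₂, t₁ + R₁t₂)`. -/
def se3Mul (g₁ g₂ : SE3) : SE3 := (g₁.1 * g₂.1, g₁.2 + mv g₁.1 g₂.2)

/-- Inverse in SE(3) (for `g.1 ∈ SO(3)`): `(R,t)⁻¹ = (Rᵀ, -Rᵀt)`. -/
def se3Inv (g : SE3) : SE3 := (g.1.transpose, -(mv g.1.transpose g.2))

/-- Action of `g ∈ SE(3)` on the ray space. -/
def act (g : SE3) (x : E3 × E3) : E3 × E3 := rayAct g.1 g.2 x.1 x.2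

/-- Action of `g = (R,t) ∈ SE(3)` on points of ℝ³: `g·p = Rp + t`. -/
def actPt (g : SE3) (p : E3) : E3 := mv g.1 p + g.2

/-- The origin ray `η = (e₃, 0)`. -/
def eta : E3 × E3 := (e3, 0)

/-- The twist `h(g, x) = s(g·x)⁻¹ · g · s(x)` of a section `s`. -/
def twist (s : E3 × E3 → SE3) (g : SE3) (x : E3 × E3) : SE3 :=
  se3Mul (se3Inv (s (act g x))) (se3Mul g (s x))

/-- Rotation by γ about the z-axis. -/
def RZ (γ : ℝ) : Matrix (Fin 3) (Fin 3) ℝ :=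
  !![Real.cos γ, -Real.sin γ, 0; Real.sin γ, Real.cos γ, 0; 0, 0, 1]

/-- Rotation by β about the y-axis. -/
def RY (β : ℝ) : Matrix (Fin 3) (Fin 3) ℝ :=
  !![Real.cos β, 0, Real.sin β; 0, 1, 0; -Real.sin β, 0, Real.cos β]

/-- The underlying line of the ray with Plücker coordinates `(d, m)`:
`L(d,m) = {p : p × d = m}`. -/
def lineOf (d m : E3) : Set E3 := {p : E3 | cross3 p d = m}

/-- Infimum of the Euclidean distances between points of the line `L(d,m)`
and points of the z-axis. -/
def Dzaxis (d m : E3) : ℝ :=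
  sInf {r : ℝ | ∃ p ∈ lineOf d m, ∃ s : ℝ, r = dist p (s • e3)}

/-- The z-coordinate `g(x) = e₃·(c - λ·d)` (with `c = d × m` and
`λ = ((e₁·c)(e₁·d) + (e₂·c)(e₂·d))/(1 - (e₃·d)²)`) of the point of `L(d,m)`
closest to the z-axis (for `d ≠ ±e₃`). -/
def zfoot (d m : E3) : ℝ :=
  ⟪e3, cross3 d m - ((⟪e1, cross3 d m⟫_ℝ * ⟪e1, d⟫_ℝ + ⟪e2, cross3 d m⟫_ℝ * ⟪e2, d⟫_ℝ)
      / (1 - ⟪e3, d⟫_ℝ ^ 2)) • d⟫_ℝ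

/-- for the section `s((d,m)) = (s_a(d), d × m)`, the twist of a
pure translation `g = (I, t)` at any ray `x = (d,m)` equals `(I, ⟨t, d⟩·e₃)`. -/
theorem statement7 (sa : E3 → Matrix (Fin 3) (Fin 3) ℝ)
    (hsa : ∀ u : E3, ‖u‖ = 1 → isSO3 (sa u) ∧ mv (sa u) e3 = u)
    (t : E3) (d m : E3) (h : isRay d m) :
    twist (fun x => (sa x.1, cross3 x.1 x.2)) (1, t) (d, m)
      = (1, ⟪t, d⟫_ℝ • e3) := by
  obtain ⟨hd, hdm⟩ := h
  obtain ⟨⟨hST, _⟩, hSe3⟩ := hsa d hd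
  set S := sa d with hS
  have hdd : d 0 ^ 2 + d 1 ^ 2 + d 2 ^ 2 = 1 := by
    have h2 : ⟪d, d⟫_ℝ = 1 := by
      rw [real_inner_self_eq_norm_sq, hd]; norm_num
    simp only [PiLp.inner_apply, RCLike.inner_apply, conj_trivial, Fin.sum_univ_three] at h2
    linear_combination h2
  have key : (t + cross3 d m) - cross3 d (m + cross3 t d) = ⟪t, d⟫_ℝ • d := by
    ext i
    have hi : (⟪t, d⟫_ℝ • d) i = (t 0 * d 0 + t 1 * d 1 + t 2 * d 2) * d i := by
      simp only [PiLp.smul_apply, PiLp.inner_apply, RCLike.inner_apply, conj_trivial,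
        Fin.sum_univ_three, smul_eq_mul]
      ring
    have hadd : ∀ (a b : E3) (j : Fin 3), (a + b) j = a j + b j := fun _ _ _ => rfl
    have hsub : ∀ (a b : E3) (j : Fin 3), (a - b) j = a j - b j := fun _ _ _ => rfl
    have hin : ⟪t, d⟫_ℝ = t 0 * d 0 + t 1 * d 1 + t 2 * d 2 := by
      simp only [PiLp.inner_apply, RCLike.inner_apply, conj_trivial, Fin.sum_univ_three]
      ring
    fin_cases i <;> simp [hi, hin, hadd, hsub, cross3, Fin.sum_univ_three] <;>
      first
        | linear_combination (-t 0) * hdd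
        | linear_combination (-t 1) * hdd
        | linear_combination (-t 2) * hdd
        | linear_combination (t 2 - t 0) * hdd
        | linear_combination (t 2 - t 1) * hdd
        | linear_combination (0 : ℝ) * hdd
  have hone : ∀ v : E3, mv 1 v = v := fun v => by simp [mv]
  unfold twist se3Mul se3Inv act rayAct
  simp only [hone]
  rw [Prod.mk.injEq]
  constructor
  · rw [one_mul]; exact hST
  · show -(mv S.transpose (cross3 d (m + cross3 t d)))
        + mv S.transpose (t + cross3 d m) = ⟪t, d⟫_ℝ • e3
    have step : -(mv S.transpose (cross3 d (m + cross3 t d)))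
        + mv S.transpose (t + cross3 d m)
        = mv S.transpose ((t + cross3 d m) - cross3 d (m + cross3 t d)) := by
      unfold mv
      simp only [WithLp.ofLp_sub, Matrix.mulVec_sub, WithLp.toLp_sub]
      abel
    rw [step, key]
    generalize ⟪t, d⟫_ℝ = c
    rw [← hSe3]
    unfold mv
    simp [Matrix.mulVec_smul, Matrix.mulVec_mulVec, hST]

end
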